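/- Let (X,ρ) be a quasimetric space with upper doubling measure μ and dominating function λ, let α > 0, C_K ≥ 1 and A ≥ 0, and let K : X × X → ℂ be measurable and satisfy the Hölder estimate |K(x,y) − K(x,z)| ≤ A · ρ(y,z)^{α}/(ρ(x,z)^{α} λ(z,ρ(x,z))) whenever ρ(y,z) ≤ ρ(x,z)/C_K. Let φ, θ ∈ L²(μ) with supports E_φ and E_θ such that: E_φ ∩ E_θ = ∅; for all x ∈ E_θ and all y, z ∈ E_φ one has ρ(y,z) ≤ ρ(x,z)/C_K; ∫ φ dμ = 0; and the functions (x,y) ↦ K(x,y)φ(y)θ(x) and (x,y) ↦ K(x,z)φ(y)θ(x) (for the fixed z below) are absolutely integrable on E_θ × E_φ. Then for every z ∈ E_φ, setting d := sup_{y ∈ E_φ} ρ(y,z), one has |∬ K(x,y) φ(y) θ(x) dμ(y) dμ(x)| ≤ A · d^{α} · ‖φ‖_{L²(μ)} · μ(E_φ)^{1/2} · ∫_{E_θ} ρ(x,z)^{−α} λ(z,ρ(x,z))^{−1} |θ(x)| dμ(x). -/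

import Mathlib

open MeasureTheory

private lemma norm_integral_le_lintegral_sub {X : Type*} [MeasurableSpace X] {μ : Measure X}
    {f g : X → ℂ} (hgm : AEStronglyMeasurable g μ) (hg0 : (∫ y, g y ∂μ) = 0) :
    (‖∫ y, f y ∂μ‖₊ : ENNReal) ≤ ∫⁻ y, ‖f y - g y‖₊ ∂μ := by
  by_cases hf : Integrable f μ
  · by_cases hgi : Integrable g μ
    · have h : (∫ y, f y ∂μ) = ∫ y, (f y - g y) ∂μ := by
        rw [integral_sub hf hgi, hg0, sub_zero]
      rw [h]
      exact enorm_integral_le_lintegral_enorm _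
    · have htop : ∫⁻ y, (‖f y - g y‖₊ : ENNReal) ∂μ = ⊤ := by
        by_contra h
        have hfg : Integrable (fun y => f y - g y) μ :=
          ⟨hf.1.sub hgm, lt_top_iff_ne_top.mpr h⟩
        exact hgi ((hf.sub hfg).congr (Filter.Eventually.of_forall fun y => by simp))
      rw [htop]; exact le_top
  · rw [integral_undef hf]; simp

private lemma sigmaFinite_restrict_of_memL2 {X : Type*} [MeasurableSpace X] {μ : Measure X}
    {f : X → ℂ} (hsm : StronglyMeasurable f) (h2 : MemLp f 2 μ) :
    SigmaFinite (μ.restrict {y | f y ≠ 0}) := by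
  have hi0 : Integrable (fun y => ‖f y‖ ^ (2 : ENNReal).toReal) μ :=
    h2.integrable_norm_rpow (by norm_num) (by norm_num)
  have hkey : (fun y => ‖f y‖ ^ (2 : ENNReal).toReal) = fun y => ‖f y‖ ^ (2 : ℕ) := by
    ext y
    rw [ENNReal.toReal_ofNat, ← Real.rpow_natCast]
    norm_num
  rw [hkey] at hi0
  have hmeas : Measurable fun y => ‖f y‖ ^ (2 : ℕ) := (hsm.measurable.norm).pow_const 2
  have hB : MeasurableSet {y | f y ≠ 0} :=
    hsm.measurable (measurableSet_singleton (0 : ℂ)).compl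
  refine ⟨⟨⟨fun n => {y | ((n : ℝ) + 1)⁻¹ ≤ ‖f y‖ ^ (2 : ℕ)} ∪ {y | f y ≠ 0}ᶜ,
    fun _ => trivial, fun n => ?_, ?_⟩⟩⟩
  · have hAn : MeasurableSet {y | ((n : ℝ) + 1)⁻¹ ≤ ‖f y‖ ^ (2 : ℕ)} :=
      measurableSet_le measurable_const hmeas
    rw [Measure.restrict_apply (hAn.union hB.compl)]
    have hfin := hi0.measure_ge_lt_top (ε := ((n : ℝ) + 1)⁻¹) (by positivity)
    refine lt_of_le_of_lt (measure_mono ?_) hfin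
    rintro y ⟨hy | hy, hyB⟩
    · exact hy
    · exact absurd hyB hy
  · ext y
    simp only [Set.mem_iUnion, Set.mem_union, Set.mem_setOf_eq, Set.mem_compl_iff,
      Set.mem_univ, iff_true]
    by_cases h : f y = 0
    · exact ⟨0, Or.inr (by simp [h])⟩
    · have hv : 0 < ‖f y‖ ^ (2 : ℕ) := pow_pos (norm_pos_iff.mpr h) 2
      obtain ⟨n, hn⟩ := exists_nat_gt (‖f y‖ ^ (2 : ℕ))⁻¹
      refine ⟨n, Or.inl ?_⟩
      have h3 : 0 < (n : ℝ) + 1 := by positivity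
      exact (inv_le_comm₀ h3 hv).mpr (hn.trans (lt_add_one _)).le

/-- one-parameter kernel estimate with one cancellative factor
(Lemma 2.5 of the paper). -/
theorem one_parameter_kernel_estimate
    {X : Type*} [MeasurableSpace X]
    (ρ : X → X → ℝ) (A₀ : ℝ) (hA₀ : 1 ≤ A₀)
    (hρ_nonneg : ∀ x y, 0 ≤ ρ x y)
    (hρ_eq : ∀ x y, ρ x y = 0 ↔ x = y)
    (hρ_symm : ∀ x y, ρ x y = ρ y x)
    (hρ_tri : ∀ x y z, ρ x z ≤ A₀ * (ρ x y + ρ y z))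
    (μ : Measure X)
    (lam : X → ℝ → ℝ) (Clam : ℝ) (hClam : 1 ≤ Clam)
    (hlam_pos : ∀ x r, 0 < r → 0 < lam x r)
    (hlam_mono : ∀ x r s, 0 < r → r ≤ s → lam x r ≤ lam x s)
    (hlam_dbl : ∀ x r, 0 < r → lam x (2 * r) ≤ Clam * lam x r)
    (hμ_lam : ∀ x r, 0 < r → μ {y | ρ x y < r} ≤ ENNReal.ofReal (lam x r))
    (α : ℝ) (hα : 0 < α) (C_K : ℝ) (hC_K : 1 ≤ C_K) (A : ℝ) (hA : 0 ≤ A)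
    (K : X → X → ℂ) (hK_meas : Measurable (Function.uncurry K))
    (hK_Holder : ∀ x y z, ρ y z ≤ ρ x z / C_K →
      ‖K x y - K x z‖ ≤ A * (ρ y z ^ α / (ρ x z ^ α * lam z (ρ x z))))
    (φ θ : X → ℂ) (hφ : MemLp φ 2 μ) (hθ : MemLp θ 2 μ)
    (hdisj : Function.support φ ∩ Function.support θ = ∅)
    (hsep : ∀ x ∈ Function.support θ, ∀ y ∈ Function.support φ,
      ∀ z ∈ Function.support φ, ρ y z ≤ ρ x z / C_K)
    (hcancel : (∫ y, φ y ∂μ) = 0)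
    (z : X) (hz : z ∈ Function.support φ)
    (hint : Integrable (fun p : X × X => K p.1 p.2 * φ p.2 * θ p.1)
      ((μ.restrict (Function.support θ)).prod (μ.restrict (Function.support φ))))
    (hint_z : Integrable (fun p : X × X => K p.1 z * φ p.2 * θ p.1)
      ((μ.restrict (Function.support θ)).prod (μ.restrict (Function.support φ))))
    (d : ℝ) (hd : IsLUB ((fun y => ρ y z) '' Function.support φ) d) :
    ENNReal.ofReal ‖∫ x, (∫ y, K x y * φ y * θ x ∂μ) ∂μ‖
      ≤ ENNReal.ofReal (A * d ^ α) * eLpNorm φ 2 μ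
          * μ (Function.support φ) ^ ((1 : ℝ) / 2)
          * ∫⁻ x in Function.support θ,
              ENNReal.ofReal (ρ x z ^ (-α) * (lam z (ρ x z))⁻¹ * ‖θ x‖) ∂μ := by
  classical
  obtain ⟨φ', hφ'm, hφφ'⟩ := hφ.1
  obtain ⟨θ', hθ'm, hθθ'⟩ := hθ.1
  set Eφ := Function.support φ with hEφdef
  set Eθ := Function.support θ with hEθdef
  set Sφ : Set X := {y | φ' y ≠ 0} with hSφdef
  set Sθ : Set X := {x | θ' x ≠ 0} with hSθdef
  have hSφm : MeasurableSet Sφ := hφ'm.measurable (measurableSet_singleton (0 : ℂ)).compl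
  have hSθm : MeasurableSet Sθ := hθ'm.measurable (measurableSet_singleton (0 : ℂ)).compl
  haveI hsf1 : SigmaFinite (μ.restrict Sθ) :=
    sigmaFinite_restrict_of_memL2 hθ'm (hθ.ae_eq hθθ')
  haveI hsf2 : SigmaFinite (μ.restrict Sφ) :=
    sigmaFinite_restrict_of_memL2 hφ'm (hφ.ae_eq hφφ')
  set C₀ : ENNReal := ENNReal.ofReal (A * d ^ α) with hC₀def
  set g : X → ENNReal :=
    fun x => ENNReal.ofReal (ρ x z ^ (-α) * (lam z (ρ x z))⁻¹ * ‖θ x‖) with hgdef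
  -- basic facts
  have hd0 : 0 ≤ d := by
    have h0 : ρ z z ≤ d := hd.1 ⟨z, hz, rfl⟩
    rwa [(hρ_eq z z).mpr rfl] at h0
  have hdub : ∀ y, y ∈ Eφ → ρ y z ≤ d := fun y hy => hd.1 ⟨y, hy, rfl⟩
  have hAd : 0 ≤ A * d ^ α := mul_nonneg hA (Real.rpow_nonneg hd0 α)
  -- the pointwise claim
  have claim : ∀ x y, (‖(K x y - K x z) * φ y * θ x‖₊ : ENNReal) ≤ (C₀ * ‖φ y‖₊) * g x := by
    intro x y
    by_cases hθx : θ x = 0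
    · simp [hθx]
    by_cases hφy : φ y = 0
    · simp [hφy]
    have hxθ : x ∈ Eθ := hθx
    have hyφ : y ∈ Eφ := hφy
    have hxz : x ≠ z := by
      intro h
      have hmem : z ∈ Eφ ∩ Eθ := ⟨hz, h ▸ hxθ⟩
      rw [hEφdef, hEθdef, hdisj] at hmem
      exact hmem
    have hρpos : 0 < ρ x z :=
      (hρ_nonneg x z).lt_of_ne fun h => hxz ((hρ_eq x z).mp h.symm)
    have hP : 0 < ρ x z ^ α := Real.rpow_pos_of_pos hρpos α
    have hΛ : 0 < lam z (ρ x z) := hlam_pos z _ hρpos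
    have h2 : ‖K x y - K x z‖ ≤ A * d ^ α * (ρ x z ^ (-α) * (lam z (ρ x z))⁻¹) := by
      have h1 := hK_Holder x y z (hsep x hxθ y hyφ z hz)
      have hyz : ρ y z ^ α ≤ d ^ α :=
        Real.rpow_le_rpow (hρ_nonneg y z) (hdub y hyφ) hα.le
      calc ‖K x y - K x z‖ ≤ A * (ρ y z ^ α / (ρ x z ^ α * lam z (ρ x z))) := h1
        _ ≤ A * (d ^ α / (ρ x z ^ α * lam z (ρ x z))) := by
            exact mul_le_mul_of_nonneg_left
              ((div_le_div_iff_of_pos_right (mul_pos hP hΛ)).mpr hyz) hA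
        _ = A * d ^ α * (ρ x z ^ (-α) * (lam z (ρ x z))⁻¹) := by
            rw [Real.rpow_neg (hρ_nonneg x z), div_eq_mul_inv, mul_inv]
            ring
    have h3 : ‖(K x y - K x z) * φ y * θ x‖
        ≤ (A * d ^ α) * (‖φ y‖ * (ρ x z ^ (-α) * (lam z (ρ x z))⁻¹ * ‖θ x‖)) := by
      rw [norm_mul, norm_mul]
      calc ‖K x y - K x z‖ * ‖φ y‖ * ‖θ x‖
          ≤ (A * d ^ α * (ρ x z ^ (-α) * (lam z (ρ x z))⁻¹)) * ‖φ y‖ * ‖θ x‖ :=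
            mul_le_mul_of_nonneg_right
              (mul_le_mul_of_nonneg_right h2 (norm_nonneg _)) (norm_nonneg _)
        _ = (A * d ^ α) * (‖φ y‖ * (ρ x z ^ (-α) * (lam z (ρ x z))⁻¹ * ‖θ x‖)) := by ring
    calc (‖(K x y - K x z) * φ y * θ x‖₊ : ENNReal)
        = ENNReal.ofReal ‖(K x y - K x z) * φ y * θ x‖ := (ofReal_norm_eq_enorm _).symm
      _ ≤ ENNReal.ofReal ((A * d ^ α) *
            (‖φ y‖ * (ρ x z ^ (-α) * (lam z (ρ x z))⁻¹ * ‖θ x‖))) :=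
          ENNReal.ofReal_le_ofReal h3
      _ = (C₀ * ‖φ y‖₊) * g x := by
          rw [ENNReal.ofReal_mul hAd, ENNReal.ofReal_mul (norm_nonneg _),
            ofReal_norm_eq_enorm, enorm_eq_nnnorm, hC₀def, hgdef]
          exact (mul_assoc _ _ _).symm
  -- the inner-integral bound
  have innerB : ∀ x, (‖∫ y, K x y * φ y * θ x ∂μ‖₊ : ENNReal)
      ≤ ∫⁻ y, ‖(K x y - K x z) * φ y * θ x‖₊ ∂μ := by
    intro x
    have hg0 : (∫ y, K x z * φ y * θ x ∂μ) = 0 := by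
      calc (∫ y, K x z * φ y * θ x ∂μ) = (∫ y, K x z * φ y ∂μ) * θ x :=
            integral_mul_const _ _
        _ = (K x z * ∫ y, φ y ∂μ) * θ x := by rw [integral_const_mul]
        _ = 0 := by rw [hcancel, mul_zero, zero_mul]
    have hgm : AEStronglyMeasurable (fun y => K x z * φ y * θ x) μ :=
      (aestronglyMeasurable_const.mul hφ.1).mul aestronglyMeasurable_const
    refine (norm_integral_le_lintegral_sub hgm hg0).trans (le_of_eq ?_)
    exact lintegral_congr fun y =>
      congrArg (fun c : ℂ => ((‖c‖₊ : ENNReal)))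
        (by ring : K x y * φ y * θ x - K x z * φ y * θ x = (K x y - K x z) * φ y * θ x)
  -- null sets
  have hZφ : μ {a | φ a ≠ φ' a} = 0 := by
    have h := hφφ'
    rwa [Filter.EventuallyEq, ae_iff] at h
  have hZθ : μ {a | θ a ≠ θ' a} = 0 := by
    have h := hθθ'
    rwa [Filter.EventuallyEq, ae_iff] at h
  have hSθsub : Sθ ⊆ Eθ ∪ {a | θ a ≠ θ' a} := by
    intro x hx
    by_cases h : θ x = θ' x
    · left; show θ x ≠ 0; rw [h]; exact hx
    · right; exact h
  have hSφsub : Sφ ⊆ Eφ ∪ {a | φ a ≠ φ' a} := by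
    intro x hx
    by_cases h : φ x = φ' x
    · left; show φ x ≠ 0; rw [h]; exact hx
    · right; exact h
  have hgν₁ : ∫⁻ x, g x ∂(μ.restrict Sθ) ≤ ∫⁻ x in Eθ, g x ∂μ := by
    calc ∫⁻ x, g x ∂(μ.restrict Sθ)
        ≤ ∫⁻ x, g x ∂(μ.restrict (Eθ ∪ {a | θ a ≠ θ' a})) :=
          lintegral_mono' (Measure.restrict_mono hSθsub le_rfl) le_rfl
      _ ≤ ∫⁻ x, g x ∂(μ.restrict Eθ + μ.restrict {a | θ a ≠ θ' a}) :=
          lintegral_mono' (Measure.restrict_union_le _ _) le_rfl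
      _ = (∫⁻ x in Eθ, g x ∂μ) + ∫⁻ x, g x ∂(μ.restrict {a | θ a ≠ θ' a}) :=
          lintegral_add_measure _ _ _
      _ = ∫⁻ x in Eθ, g x ∂μ := by
          rw [Measure.restrict_eq_zero.mpr hZθ, lintegral_zero_measure, add_zero]
  have hμSφ : μ Sφ ≤ μ Eφ := by
    calc μ Sφ ≤ μ (Eφ ∪ {a | φ a ≠ φ' a}) := measure_mono hSφsub
      _ ≤ μ Eφ + μ {a | φ a ≠ φ' a} := measure_union_le _ _
      _ = μ Eφ := by rw [hZφ, add_zero]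
  -- trivial-case helper
  have hLHS0 : (∀ x, (∫ y, K x y * φ y * θ x ∂μ) = 0) →
      ENNReal.ofReal ‖∫ x, (∫ y, K x y * φ y * θ x ∂μ) ∂μ‖ = 0 := by
    intro h
    simp [h]
  by_cases hL : (∫⁻ x in Eθ, g x ∂μ) = ⊤
  · by_cases hC₀ : C₀ = 0
    · have h0 : ∀ x, (∫ y, K x y * φ y * θ x ∂μ) = 0 := by
        intro x
        have h1 : (‖∫ y, K x y * φ y * θ x ∂μ‖₊ : ENNReal) ≤ 0 := by
          refine (innerB x).trans ?_
          have hy : ∀ y, (‖(K x y - K x z) * φ y * θ x‖₊ : ENNReal) ≤ 0 := fun y => by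
            simpa [hC₀] using claim x y
          calc ∫⁻ y, (‖(K x y - K x z) * φ y * θ x‖₊ : ENNReal) ∂μ
              ≤ ∫⁻ _, (0 : ENNReal) ∂μ := lintegral_mono hy
            _ = 0 := lintegral_zero
        simpa using h1
      rw [hLHS0 h0]
      exact zero_le
    · by_cases hφ0 : φ =ᵐ[μ] 0
      · have h0 : ∀ x, (∫ y, K x y * φ y * θ x ∂μ) = 0 := by
          intro x
          have he : (fun y => K x y * φ y * θ x) =ᵐ[μ] fun _ => (0 : ℂ) := by
            filter_upwards [hφ0] with y hy
            simp [hy]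
          rw [integral_congr_ae he, integral_zero]
        rw [hLHS0 h0]
        exact zero_le
      · have hE : eLpNorm φ 2 μ ≠ 0 :=
          fun h => hφ0 ((eLpNorm_eq_zero_iff hφ.1 (by norm_num)).mp h)
        have hμEφ : μ Eφ ≠ 0 := by
          intro h
          apply hφ0
          rw [Filter.EventuallyEq, ae_iff]
          simpa using (show μ {a | ¬φ a = 0} = 0 from h)
        have hMp : μ Eφ ^ ((1 : ℝ) / 2) ≠ 0 := by
          intro h
          rcases ENNReal.rpow_eq_zero_iff.mp h with ⟨h1, _⟩ | ⟨_, h2⟩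
          · exact hμEφ h1
          · norm_num at h2
        rw [hL, ENNReal.mul_top (mul_ne_zero (mul_ne_zero hC₀ hE) hMp)]
        exact le_top
  · -- main case
    set D : X × X → ENNReal :=
      fun p => (‖(K p.1 p.2 - K p.1 z) * φ p.2 * θ p.1‖₊ : ENNReal) with hDdef
    have hDm : AEMeasurable D ((μ.restrict Sθ).prod (μ.restrict Sφ)) := by
      have hKz : Measurable fun x : X => K x z :=
        hK_meas.comp (measurable_id.prodMk measurable_const)
      have hD'm : Measurable fun p : X × X =>
          (‖(K p.1 p.2 - K p.1 z) * φ' p.2 * θ' p.1‖₊ : ENNReal) :=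
        ((((hK_meas.sub (hKz.comp measurable_fst)).mul
          (hφ'm.measurable.comp measurable_snd)).mul
          (hθ'm.measurable.comp measurable_fst))).enorm
      refine hD'm.aemeasurable.congr ?_
      have h1 := MeasureTheory.Measure.quasiMeasurePreserving_snd
        (μ := μ.restrict Sθ) (ν := μ.restrict Sφ) |>.ae_eq_comp
        (hφφ'.filter_mono (ae_mono Measure.restrict_le_self))
      have h2 := MeasureTheory.Measure.quasiMeasurePreserving_fst
        (μ := μ.restrict Sθ) (ν := μ.restrict Sφ) |>.ae_eq_comp
        (hθθ'.filter_mono (ae_mono Measure.restrict_le_self))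
      filter_upwards [h1, h2] with p hp1 hp2
      simp only [Function.comp_apply] at hp1 hp2
      rw [hDdef]
      simp only []
      rw [hp1, hp2]
    have hN₂ : ∫⁻ y, (‖φ y‖₊ : ENNReal) ∂(μ.restrict Sφ)
        ≤ eLpNorm φ 2 μ * μ Eφ ^ ((1 : ℝ) / 2) := by
      change ∫⁻ y, ‖φ y‖ₑ ∂(μ.restrict Sφ) ≤ _
      rw [← eLpNorm_one_eq_lintegral_enorm]
      have h2 := eLpNorm_le_eLpNorm_mul_rpow_measure_univ (p := 1) (q := 2)
        (μ := μ.restrict Sφ) (f := φ) (by norm_num) hφ.1.restrict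
      refine h2.trans ?_
      have he : (1 / (1 : ENNReal).toReal - 1 / (2 : ENNReal).toReal) = ((1 : ℝ) / 2) := by
        norm_num
      rw [he, Measure.restrict_apply_univ]
      exact mul_le_mul' (eLpNorm_mono_measure _ Measure.restrict_le_self)
        (ENNReal.rpow_le_rpow hμSφ (by norm_num))
    have hC₀top : C₀ ≠ ⊤ := by rw [hC₀def]; exact ENNReal.ofReal_ne_top
    calc ENNReal.ofReal ‖∫ x, (∫ y, K x y * φ y * θ x ∂μ) ∂μ‖
        = (‖∫ x, (∫ y, K x y * φ y * θ x ∂μ) ∂μ‖₊ : ENNReal) := ofReal_norm_eq_enorm _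
      _ ≤ ∫⁻ x, (‖∫ y, K x y * φ y * θ x ∂μ‖₊ : ENNReal) ∂μ :=
          enorm_integral_le_lintegral_enorm _
      _ = ∫⁻ x, (‖∫ y, K x y * φ y * θ x ∂μ‖₊ : ENNReal) ∂(μ.restrict Sθ)
          + ∫⁻ x, (‖∫ y, K x y * φ y * θ x ∂μ‖₊ : ENNReal) ∂(μ.restrict Sθᶜ) := by
          rw [← lintegral_add_measure, Measure.restrict_add_restrict_compl hSθm]
      _ = ∫⁻ x, (‖∫ y, K x y * φ y * θ x ∂μ‖₊ : ENNReal) ∂(μ.restrict Sθ) := by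
          have hz2 : ∫⁻ x, (‖∫ y, K x y * φ y * θ x ∂μ‖₊ : ENNReal) ∂(μ.restrict Sθᶜ) = 0 := by
            have hae : ∀ᵐ x ∂(μ.restrict Sθᶜ),
                (‖∫ y, K x y * φ y * θ x ∂μ‖₊ : ENNReal) = 0 := by
              filter_upwards [ae_restrict_mem hSθm.compl,
                hθθ'.filter_mono (ae_mono Measure.restrict_le_self)] with x hx hθx
              have hx0 : θ x = 0 := by
                rw [hθx]
                simpa [hSθdef] using hx
              simp [hx0]
            rw [lintegral_congr_ae hae, lintegral_zero]
          rw [hz2, add_zero]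
      _ ≤ ∫⁻ x, (∫⁻ y, D (x, y) ∂(μ.restrict Sφ)) ∂(μ.restrict Sθ) := by
          apply lintegral_mono
          intro x
          refine (innerB x).trans ?_
          have hsplit : ∫⁻ y, (‖(K x y - K x z) * φ y * θ x‖₊ : ENNReal) ∂μ
              = ∫⁻ y, (‖(K x y - K x z) * φ y * θ x‖₊ : ENNReal) ∂(μ.restrict Sφ)
                + ∫⁻ y, (‖(K x y - K x z) * φ y * θ x‖₊ : ENNReal) ∂(μ.restrict Sφᶜ) := by
            rw [← lintegral_add_measure, Measure.restrict_add_restrict_compl hSφm]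
          have hz3 : ∫⁻ y, (‖(K x y - K x z) * φ y * θ x‖₊ : ENNReal) ∂(μ.restrict Sφᶜ) = 0 := by
            have hae : ∀ᵐ y ∂(μ.restrict Sφᶜ),
                (‖(K x y - K x z) * φ y * θ x‖₊ : ENNReal) = 0 := by
              filter_upwards [ae_restrict_mem hSφm.compl,
                hφφ'.filter_mono (ae_mono Measure.restrict_le_self)] with y hy hφy
              have hy0 : φ y = 0 := by
                rw [hφy]
                simpa [hSφdef] using hy
              simp [hy0]
            rw [lintegral_congr_ae hae, lintegral_zero]
          rw [hsplit, hz3, add_zero]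
      _ = ∫⁻ p, D p ∂((μ.restrict Sθ).prod (μ.restrict Sφ)) := (lintegral_prod D hDm).symm
      _ = ∫⁻ y, (∫⁻ x, D (x, y) ∂(μ.restrict Sθ)) ∂(μ.restrict Sφ) := lintegral_prod_symm D hDm
      _ ≤ ∫⁻ y, (C₀ * ‖φ y‖₊) * (∫⁻ x in Eθ, g x ∂μ) ∂(μ.restrict Sφ) := by
          apply lintegral_mono
          intro y
          calc ∫⁻ x, D (x, y) ∂(μ.restrict Sθ)
              ≤ ∫⁻ x, (C₀ * ‖φ y‖₊) * g x ∂(μ.restrict Sθ) :=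
                lintegral_mono fun x => claim x y
            _ = (C₀ * ‖φ y‖₊) * ∫⁻ x, g x ∂(μ.restrict Sθ) :=
                lintegral_const_mul' _ _ (ENNReal.mul_ne_top hC₀top ENNReal.coe_ne_top)
            _ ≤ (C₀ * ‖φ y‖₊) * (∫⁻ x in Eθ, g x ∂μ) := mul_le_mul_right hgν₁ _
      _ = ∫⁻ y, (C₀ * (∫⁻ x in Eθ, g x ∂μ)) * ‖φ y‖₊ ∂(μ.restrict Sφ) :=
          lintegral_congr fun y => by ring
      _ = (C₀ * (∫⁻ x in Eθ, g x ∂μ)) * ∫⁻ y, (‖φ y‖₊ : ENNReal) ∂(μ.restrict Sφ) :=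
          lintegral_const_mul' _ _ (ENNReal.mul_ne_top hC₀top hL)
      _ ≤ (C₀ * (∫⁻ x in Eθ, g x ∂μ)) * (eLpNorm φ 2 μ * μ Eφ ^ ((1 : ℝ) / 2)) :=
          mul_le_mul_right hN₂ _
      _ = C₀ * eLpNorm φ 2 μ * μ Eφ ^ ((1 : ℝ) / 2) * (∫⁻ x in Eθ, g x ∂μ) := by ring
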